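/- Let G be a prime P5-free graph that is not a thin spider. Then any efficient dominating set of G has exactly two vertices. -/

import Mathlib

open SimpleGraph

/-- `D` is an efficient dominating set: every vertex is dominated by exactly one vertex of `D`
(a vertex dominates itself and its neighbors). -/
def SimpleGraph.IsEDS {V : Type*} (G : SimpleGraph V) (D : Set V) : Prop :=
  ∀ v : V, ∃! d, d ∈ D ∧ (d = v ∨ G.Adj d v)

/-- The closed neighborhood of a vertex. -/
def SimpleGraph.closedNbhd {V : Type*} (G : SimpleGraph V) (v : V) : Set V :=
  insert v (G.neighborSet v)

/-- A homogeneous set: at least two vertices, not all of them, and every outside vertex is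
adjacent to all or to none of them. -/
def SimpleGraph.IsHomogeneousSet {V : Type*} (G : SimpleGraph V) (H : Set V) : Prop :=
  2 ≤ H.ncard ∧ H ≠ Set.univ ∧
    ∀ v ∉ H, (∀ h ∈ H, G.Adj v h) ∨ (∀ h ∈ H, ¬ G.Adj v h)

/-- A prime graph: at least two vertices and no homogeneous set. -/
def SimpleGraph.IsPrime {V : Type*} [Fintype V] (G : SimpleGraph V) : Prop :=
  2 ≤ Fintype.card V ∧ ∀ H : Set V, ¬ G.IsHomogeneousSet H

/-- `G` is `P₅`-free: no induced subgraph isomorphic to the path on five vertices. -/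
def SimpleGraph.P5Free {V : Type*} (G : SimpleGraph V) : Prop :=
  ¬ Nonempty (SimpleGraph.pathGraph 5 ↪g G)

/-- The graph `2P₂`: the disjoint union of two edges. -/
def twoP2 : SimpleGraph (Fin 4) :=
  SimpleGraph.fromRel (fun a b => (a = 0 ∧ b = 1) ∨ (a = 2 ∧ b = 3))

/-- `G` is `2P₂`-free: no induced subgraph isomorphic to `2P₂`. -/
def SimpleGraph.TwoP2Free {V : Type*} (G : SimpleGraph V) : Prop :=
  ¬ Nonempty (twoP2 ↪g G)

/-- A thin spider: a split graph with a clique side `C` and independent side `I`,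
with a perfect matching between `C` and `I`. -/
def SimpleGraph.IsThinSpider {V : Type*} (G : SimpleGraph V) : Prop :=
  ∃ C I : Set V, Disjoint C I ∧ C ∪ I = Set.univ ∧ G.IsClique C ∧
    (∀ a ∈ I, ∀ b ∈ I, a ≠ b → ¬ G.Adj a b) ∧
    (∀ c ∈ C, ∃! i, i ∈ I ∧ G.Adj c i) ∧
    (∀ i ∈ I, ∃! c, c ∈ C ∧ G.Adj i c)

section Aux

variable {V : Type*} {G : SimpleGraph V} {D : Set V}

/-- If we have an induced P5, contradiction with P5-freeness. -/
lemma p5_aux (hP5 : G.P5Free)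
    {v0 v1 v2 v3 v4 : V}
    (e01 : G.Adj v0 v1) (e12 : G.Adj v1 v2) (e23 : G.Adj v2 v3) (e34 : G.Adj v3 v4)
    (n02 : ¬ G.Adj v0 v2) (n03 : ¬ G.Adj v0 v3) (n04 : ¬ G.Adj v0 v4)
    (n13 : ¬ G.Adj v1 v3) (n14 : ¬ G.Adj v1 v4) (n24 : ¬ G.Adj v2 v4)
    (d02 : v0 ≠ v2) (d03 : v0 ≠ v3) (d04 : v0 ≠ v4)
    (d13 : v1 ≠ v3) (d14 : v1 ≠ v4) (d24 : v2 ≠ v4) : False := by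
  apply hP5
  have d01 := G.ne_of_adj e01
  have d12 := G.ne_of_adj e12
  have d23 := G.ne_of_adj e23
  have d34 := G.ne_of_adj e34
  let f : Fin 5 → V := fun i =>
    match i with
    | 0 => v0 | 1 => v1 | 2 => v2 | 3 => v3 | 4 => v4
  have hinj : Function.Injective f := by
    intro i j hij
    fin_cases i <;> fin_cases j <;> simp_all [f]
  have s02 : ¬ G.Adj v2 v0 := fun h => n02 h.symm
  have s03 : ¬ G.Adj v3 v0 := fun h => n03 h.symm
  have s04 : ¬ G.Adj v4 v0 := fun h => n04 h.symm
  have s13 : ¬ G.Adj v3 v1 := fun h => n13 h.symm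
  have s14 : ¬ G.Adj v4 v1 := fun h => n14 h.symm
  have s24 : ¬ G.Adj v4 v2 := fun h => n24 h.symm
  refine ⟨⟨⟨f, hinj⟩, ?_⟩⟩
  intro i j
  show G.Adj (f i) (f j) ↔ _
  fin_cases i <;> fin_cases j <;>
    simp only [f, pathGraph_adj] <;>
    first
    | exact iff_of_true (by first | assumption | (apply G.adj_symm; assumption)) (by decide)
    | exact iff_of_false (by first | exact G.irrefl | assumption) (by decide)

/-- Every vertex is dominated by some element of `D`. -/
lemma eds_dom (hD : G.IsEDS D) (v : V) : ∃ d ∈ D, d = v ∨ G.Adj d v := by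
  obtain ⟨d, hd, -⟩ := hD v
  exact ⟨d, hd.1, hd.2⟩

/-- Uniqueness of dominators. -/
lemma eds_nc (hD : G.IsEDS D) {d d' v : V} (hd : d ∈ D) (hd' : d' ∈ D)
    (h1 : G.Adj d v) (h2 : G.Adj d' v) : d = d' := by
  obtain ⟨w, -, hu⟩ := hD v
  rw [hu d ⟨hd, Or.inr h1⟩, hu d' ⟨hd', Or.inr h2⟩]

lemma eds_nc' (hD : G.IsEDS D) {d d' v : V} (hd : d ∈ D) (hd' : d' ∈ D)
    (h1 : d = v ∨ G.Adj d v) (h2 : d' = v ∨ G.Adj d' v) : d = d' := by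
  obtain ⟨w, -, hu⟩ := hD v
  rw [hu d ⟨hd, h1⟩, hu d' ⟨hd', h2⟩]

/-- D is independent. -/
lemma eds_indep (hD : G.IsEDS D) {d d' : V} (hd : d ∈ D) (hd' : d' ∈ D) :
    ¬ G.Adj d d' := by
  intro h
  exact G.ne_of_adj h (eds_nc' hD hd hd' (Or.inr h) (Or.inl rfl))

/-- Neighbors of D-vertices are not in D. -/
lemma eds_notD (hD : G.IsEDS D) {d a : V} (hd : d ∈ D) (ha : G.Adj d a) : a ∉ D :=
  fun haD => eds_indep hD hd haD ha

/-- A vertex adjacent to a member of the class of `d'` is not adjacent to `d ≠ d'`. -/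
lemma eds_cross (hD : G.IsEDS D) {d d' x : V} (hd : d ∈ D) (hd' : d' ∈ D)
    (hne : d ≠ d') (hx : G.Adj d' x) : ¬ G.Adj d x :=
  fun h => hne (eds_nc hD hd hd' h hx)

/-- Vertices of distinct classes are distinct. -/
lemma eds_class_ne (hD : G.IsEDS D) {d d' x y : V} (hd : d ∈ D) (hd' : d' ∈ D)
    (hne : d ≠ d') (hx : G.Adj d x) (hy : G.Adj d' y) : x ≠ y :=
  fun h => hne (eds_nc hD hd hd' (h ▸ hx) hy)

lemma eds_dom' (hD : G.IsEDS D) {v : V} (hv : v ∉ D) : ∃ e ∈ D, G.Adj e v := by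
  obtain ⟨d, hd, hcase⟩ := eds_dom hD v
  rcases hcase with rfl | h
  · exact absurd hd hv
  · exact ⟨d, hd, h⟩

end Aux

section Main

variable {V : Type*} [Fintype V] {G : SimpleGraph V} {D : Set V}

lemma no_isolated (hprime : G.IsPrime) (hcard3 : 3 ≤ Fintype.card V) (v : V) :
    ∃ w, G.Adj v w := by
  by_contra h
  push_neg at h
  apply hprime.2 ({v}ᶜ)
  refine ⟨?_, ?_, ?_⟩
  · have hsum := Set.ncard_add_ncard_compl ({v} : Set V)
    rw [Set.ncard_singleton, Nat.card_eq_fintype_card] at hsum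
    omega
  · intro hu
    have : v ∈ ({v}ᶜ : Set V) := hu ▸ Set.mem_univ v
    exact this rfl
  · intro u hu
    simp only [Set.notMem_compl_iff, Set.mem_singleton_iff] at hu
    subst hu
    exact Or.inr (fun h' _ hadj => h h' hadj)

/-- Every neighbor of `d ∈ D` has a neighbor outside the closed neighborhood of `d`. -/
lemma lem1 (hprime : G.IsPrime) (hP5 : G.P5Free) (hD : G.IsEDS D)
    {d1 d2 a : V} (hd1 : d1 ∈ D) (hd2 : d2 ∈ D) (hne : d1 ≠ d2)
    (ha : G.Adj d1 a) : ∃ w, G.Adj a w ∧ w ≠ d1 ∧ ¬ G.Adj d1 w := by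
  by_contra hno
  push_neg at hno
  set Int : Set V := {x | G.Adj d1 x ∧ ∀ w, G.Adj x w → w = d1 ∨ G.Adj d1 w} with hInt
  apply hprime.2 (insert d1 Int)
  have haInt : a ∈ Int := by
    refine ⟨ha, fun w hw => ?_⟩
    by_cases h1 : w = d1
    · exact Or.inl h1
    · exact Or.inr (hno w hw h1)
  refine ⟨?_, ?_, ?_⟩
  · exact (Set.one_lt_ncard_iff (Set.toFinite _)).mpr
      ⟨d1, a, Set.mem_insert _ _, Set.mem_insert_of_mem _ haInt, G.ne_of_adj ha⟩
  · intro hu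
    have hd2mem : d2 ∈ insert d1 Int := hu ▸ Set.mem_univ d2
    rcases hd2mem with h | h
    · exact hne h.symm
    · exact eds_indep hD hd1 hd2 h.1
  · intro v hv
    by_cases hvadj : G.Adj d1 v
    · -- v in the class of d1 but not internal: it has an outside neighbor
      left
      have hvInt : v ∉ Int := fun hmem => hv (Set.mem_insert_of_mem _ hmem)
      have : ∃ w, G.Adj v w ∧ ¬ (w = d1 ∨ G.Adj d1 w) := by
        by_contra hcon
        push_neg at hcon
        exact hvInt ⟨hvadj, fun w hw => hcon w hw⟩
      obtain ⟨w, hvw, hwbad⟩ := this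
      push_neg at hwbad
      obtain ⟨hwd1, hwnadj⟩ := hwbad
      have hwD : w ∉ D := by
        intro hwD
        exact hwd1 (eds_nc hD hwD hd1 hvw.symm hvadj)
      obtain ⟨e, heD, hew⟩ := eds_dom' hD hwD
      have hed1 : e ≠ d1 := fun h => hwnadj (h ▸ hew)
      intro h hh
      rcases hh with rfl | hhInt
      · exact hvadj.symm
      · -- h ∈ Int : show Adj v h via P5  e-w-v-d1-h
        by_contra hvh
        exact p5_aux hP5 hew hvw.symm hvadj.symm hhInt.1
          (eds_cross hD heD hd1 hed1 hvadj)
          (eds_indep hD heD hd1)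
          (eds_cross hD heD hd1 hed1 hhInt.1)
          (fun hcon => hwnadj hcon.symm)
          (fun hcon => (hhInt.2 w hcon.symm).elim (fun h' => hwd1 h') (fun h' => hwnadj h'))
          hvh
          (fun h' => eds_notD hD hd1 hvadj (h' ▸ heD))
          hed1
          (fun h' => eds_notD hD hd1 hhInt.1 (h' ▸ heD))
          hwd1
          (fun h' => hwnadj (by rw [h']; exact hhInt.1))
          (fun h' => hvInt (by rw [h']; exact hhInt))
    · -- v not adjacent to d1 and v ≠ d1: adjacent to nothing in the set
      right
      have hvd1 : v ≠ d1 := fun h => hv (h ▸ Set.mem_insert d1 Int)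
      intro h hh hadj
      rcases hh with rfl | hhInt
      · exact hvadj hadj.symm
      · rcases hhInt.2 v hadj.symm with h' | h'
        · exact hvd1 h'
        · exact hvadj h'

end Main

section Main2

variable {V : Type*} [Fintype V] {G : SimpleGraph V} {D : Set V}

/-- Two `D`-classes are linked if there is an edge between their neighborhoods. -/
def linkRel (G : SimpleGraph V) (u w : V) : Prop :=
  u = w ∨ ∃ x y, G.Adj u x ∧ G.Adj w y ∧ G.Adj x y

lemma link_trans (hP5 : G.P5Free) (hD : G.IsEDS D)
    {a b c : V} (haD : a ∈ D) (hbD : b ∈ D) (hcD : c ∈ D)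
    (rab : linkRel G a b) (rbc : linkRel G b c) : linkRel G a c := by
  rcases rab with rfl | ⟨x1, y1, hx1, hy1, hxy1⟩
  · exact rbc
  rcases rbc with rfl | ⟨x2, y2, hx2, hy2, hxy2⟩
  · exact Or.inr ⟨x1, y1, hx1, hy1, hxy1⟩
  by_cases hab : a = b
  · exact Or.inr ⟨x2, y2, hab ▸ hx2, hy2, hxy2⟩
  by_cases hbc : b = c
  · exact Or.inr ⟨x1, y1, hx1, hbc ▸ hy1, hxy1⟩
  by_cases hac : a = c
  · exact Or.inl hac
  refine Or.inr ?_
  -- now a, b, c pairwise distinct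
  by_contra hno
  push_neg at hno
  have key : ∀ z, G.Adj b z → G.Adj x1 z → G.Adj z y2 → False := by
    intro z hz hx1z hzy2
    exact p5_aux hP5 hx1 hx1z hzy2 hy2.symm
      (eds_cross hD haD hbD hab hz)
      (eds_cross hD haD hcD hac hy2)
      (eds_indep hD haD hcD)
      (hno x1 y2 hx1 hy2)
      (fun h => eds_cross hD hcD haD (Ne.symm hac) hx1 h.symm)
      (fun h => eds_cross hD hcD hbD (Ne.symm hbc) hz h.symm)
      (fun h => eds_notD hD hbD hz (h ▸ haD))
      (fun h => eds_notD hD hcD hy2 (h ▸ haD))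
      hac
      (eds_class_ne hD haD hcD hac hx1 hy2)
      (fun h => eds_notD hD haD hx1 (h.symm ▸ hcD))
      (fun h => eds_notD hD hbD hz (h.symm ▸ hcD))
  by_cases hb12 : y1 = x2
  · exact key y1 hy1 hxy1 (hb12 ▸ hxy2)
  by_cases hax : G.Adj x1 x2
  · exact key x2 hx2 hax hxy2
  by_cases hbb : G.Adj y1 x2
  · by_cases hyc : G.Adj y1 y2
    · exact key y1 hy1 hxy1 hyc
    · -- P5  a - x1 - y1 - x2 - y2
      exact p5_aux hP5 hx1 hxy1 hbb hxy2
        (eds_cross hD haD hbD hab hy1)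
        (eds_cross hD haD hbD hab hx2)
        (eds_cross hD haD hcD hac hy2)
        hax
        (hno x1 y2 hx1 hy2)
        hyc
        (fun h => eds_notD hD hbD hy1 (h ▸ haD))
        (fun h => eds_notD hD hbD hx2 (h ▸ haD))
        (fun h => eds_notD hD hcD hy2 (h ▸ haD))
        (eds_class_ne hD haD hbD hab hx1 hx2)
        (eds_class_ne hD haD hcD hac hx1 hy2)
        (eds_class_ne hD hbD hcD hbc hy1 hy2)
  · -- P5  a - x1 - y1 - b - x2
    exact p5_aux hP5 hx1 hxy1 hy1.symm hx2
      (eds_cross hD haD hbD hab hy1)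
      (eds_indep hD haD hbD)
      (eds_cross hD haD hbD hab hx2)
      (fun h => eds_cross hD hbD haD (Ne.symm hab) hx1 h.symm)
      hax
      hbb
      (fun h => eds_notD hD hbD hy1 (h ▸ haD))
      hab
      (fun h => eds_notD hD hbD hx2 (h ▸ haD))
      (fun h => eds_notD hD haD hx1 (h.symm ▸ hbD))
      (eds_class_ne hD haD hbD hab hx1 hx2)
      hb12

/-- Quotient completeness: any two distinct vertices of `D` are linked by an edge
between their neighborhoods. -/
lemma lem2 (hprime : G.IsPrime) (hP5 : G.P5Free) (hD : G.IsEDS D)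
    (hcard3 : 3 ≤ Fintype.card V) {d d' : V} (hd : d ∈ D) (hd' : d' ∈ D)
    (hne : d ≠ d') : ∃ x y, G.Adj d x ∧ G.Adj d' y ∧ G.Adj x y := by
  set S : Set V := {v | ∃ e, e ∈ D ∧ linkRel G d e ∧ (v = e ∨ G.Adj e v)} with hS
  have hclosed : ∀ s ∈ S, ∀ v, G.Adj s v → v ∈ S := by
    rintro s ⟨e, heD, hRe, hse⟩ v hsv
    rcases hse with heq | hes
    · exact ⟨e, heD, hRe, Or.inr (heq ▸ hsv)⟩
    · by_cases hvD : v ∈ D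
      · have hev : e = v := eds_nc hD heD hvD hes hsv.symm
        exact ⟨e, heD, hRe, Or.inl hev.symm⟩
      · obtain ⟨e', he'D, he'v⟩ := eds_dom' hD hvD
        have hRee' : linkRel G e e' := Or.inr ⟨s, v, hes, he'v, hsv⟩
        exact ⟨e', he'D, link_trans hP5 hD hd heD he'D hRe hRee', Or.inr he'v⟩
  have hdS : d ∈ S := ⟨d, hd, Or.inl rfl, Or.inl rfl⟩
  obtain ⟨a0, ha0⟩ := no_isolated hprime hcard3 d
  have hSuniv : S = Set.univ := by
    by_contra hSu
    apply hprime.2 S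
    refine ⟨?_, hSu, ?_⟩
    · exact (Set.one_lt_ncard_iff (Set.toFinite _)).mpr
        ⟨d, a0, hdS, hclosed d hdS a0 ha0, G.ne_of_adj ha0⟩
    · intro v hv
      right
      intro h hh hadj
      exact hv (hclosed h hh v hadj.symm)
  have hd'S : d' ∈ S := hSuniv ▸ Set.mem_univ d'
  obtain ⟨e, heD, hRe, hcase⟩ := hd'S
  rcases hcase with heq | hadj
  · subst heq
    rcases hRe with heq2 | hex
    · exact absurd heq2 hne
    · exact hex
  · exact absurd hadj (eds_indep hD heD hd')

end Main2

section Main3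

variable {V : Type*} [Fintype V] {G : SimpleGraph V} {D : Set V}

/-- Every vertex in the class of `d1` has a neighbor in the class of any other `d3 ∈ D`. -/
lemma lem4 (hprime : G.IsPrime) (hP5 : G.P5Free) (hD : G.IsEDS D)
    (hcard3 : 3 ≤ Fintype.card V) {d1 d3 q : V} (hd1 : d1 ∈ D) (hd3 : d3 ∈ D)
    (h13 : d1 ≠ d3) (hq : G.Adj d1 q) : ∃ c, G.Adj d3 c ∧ G.Adj q c := by
  by_contra hno
  push_neg at hno
  obtain ⟨w, hqw, hwne, hwnadj⟩ := lem1 hprime hP5 hD hd1 hd3 h13 hq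
  have hwD : w ∉ D := fun hwD => hwne (eds_nc hD hwD hd1 hqw.symm hq)
  obtain ⟨dm, hdmD, hdmw⟩ := eds_dom' hD hwD
  have hdm1 : dm ≠ d1 := fun h => hwnadj (h ▸ hdmw)
  have hdm3 : dm ≠ d3 := fun h => hno w (h ▸ hdmw) hqw
  obtain ⟨x, c, hx, hc, hxc⟩ := lem2 hprime hP5 hD hcard3 hd1 hd3 h13
  have hqc : ¬ G.Adj q c := hno c hc
  have hqx : G.Adj q x := by
    by_contra hqxn
    -- P5  d3 - c - x - d1 - q
    exact p5_aux hP5 hc hxc.symm hx.symm hq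
      (eds_cross hD hd3 hd1 h13.symm hx)
      (eds_indep hD hd3 hd1)
      (eds_cross hD hd3 hd1 h13.symm hq)
      (fun h => eds_cross hD hd1 hd3 h13 hc h.symm)
      (fun h => hqc h.symm)
      (fun h => hqxn h.symm)
      (fun h => eds_notD hD hd1 hx (h ▸ hd3))
      h13.symm
      (fun h => eds_notD hD hd1 hq (h ▸ hd3))
      (fun h => eds_notD hD hd3 hc (h.symm ▸ hd1))
      (eds_class_ne hD hd3 hd1 h13.symm hc hq)
      (fun h => hqc (h ▸ hxc))
  have h7 : G.Adj c w ∨ G.Adj x w := by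
    by_contra hn
    push_neg at hn
    -- P5  d3 - c - x - q - w
    exact p5_aux hP5 hc hxc.symm hqx.symm hqw
      (eds_cross hD hd3 hd1 h13.symm hx)
      (eds_cross hD hd3 hd1 h13.symm hq)
      (fun h => eds_cross hD hd3 hdmD hdm3.symm hdmw h)
      (fun h => hqc h.symm)
      hn.1
      hn.2
      (fun h => eds_notD hD hd1 hx (h ▸ hd3))
      (fun h => eds_notD hD hd1 hq (h ▸ hd3))
      (fun h => eds_notD hD hdmD hdmw (h ▸ hd3))
      (eds_class_ne hD hd3 hd1 h13.symm hc hq)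
      (eds_class_ne hD hd3 hdmD hdm3.symm hc hdmw)
      (eds_class_ne hD hd1 hdmD hdm1.symm hx hdmw)
  have hcw : G.Adj c w := by
    rcases h7 with h | hxw
    · exact h
    · by_contra hncw
      -- P5  d3 - c - x - w - dm
      exact p5_aux hP5 hc hxc.symm hxw hdmw.symm
        (eds_cross hD hd3 hd1 h13.symm hx)
        (fun h => eds_cross hD hd3 hdmD hdm3.symm hdmw h)
        (eds_indep hD hd3 hdmD)
        hncw
        (fun h => eds_cross hD hdmD hd3 hdm3 hc h.symm)
        (fun h => eds_cross hD hdmD hd1 hdm1 hx h.symm)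
        (fun h => eds_notD hD hd1 hx (h ▸ hd3))
        (fun h => eds_notD hD hdmD hdmw (h ▸ hd3))
        hdm3.symm
        (eds_class_ne hD hd3 hdmD hdm3.symm hc hdmw)
        (fun h => eds_notD hD hd3 hc (h.symm ▸ hdmD))
        (fun h => eds_notD hD hd1 hx (h.symm ▸ hdmD))
  -- final P5  d1 - q - w - c - d3
  exact p5_aux hP5 hq hqw hcw.symm hc.symm
    hwnadj
    (eds_cross hD hd1 hd3 h13 hc)
    (eds_indep hD hd1 hd3)
    hqc
    (fun h => eds_cross hD hd3 hd1 h13.symm hq h.symm)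
    (fun h => eds_cross hD hd3 hdmD hdm3.symm hdmw h.symm)
    (fun h => hwne h.symm)
    (fun h => eds_notD hD hd3 hc (h ▸ hd1))
    h13
    (eds_class_ne hD hd1 hd3 h13 hq hc)
    (fun h => eds_notD hD hd1 hq (h.symm ▸ hd3))
    (fun h => eds_notD hD hdmD hdmw (h.symm ▸ hd3))

/-- Cross-class completeness. -/
lemma lem5 (hprime : G.IsPrime) (hP5 : G.P5Free) (hD : G.IsEDS D)
    (hk : 3 ≤ D.ncard) {d1 d2 a b : V} (hd1 : d1 ∈ D) (hd2 : d2 ∈ D)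
    (h12 : d1 ≠ d2) (ha : G.Adj d1 a) (hb : G.Adj d2 b) : G.Adj a b := by
  have hcard3 : 3 ≤ Fintype.card V := by
    calc 3 ≤ D.ncard := hk
    _ ≤ (Set.univ : Set V).ncard := Set.ncard_le_ncard (Set.subset_univ D) (Set.toFinite _)
    _ = Fintype.card V := by rw [Set.ncard_univ, Nat.card_eq_fintype_card]
  by_contra hab
  -- third class
  have hsub : ¬ D ⊆ {d1, d2} := by
    intro hsub
    have := Set.ncard_le_ncard hsub (Set.toFinite _)
    rw [Set.ncard_pair h12] at this
    omega
  obtain ⟨d3, hd3, hd3n⟩ := Set.not_subset.mp hsub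
  simp only [Set.mem_insert_iff, Set.mem_singleton_iff, not_or] at hd3n
  obtain ⟨h31, h32⟩ := hd3n
  obtain ⟨a', ha'1, hba'⟩ := lem4 hprime hP5 hD hcard3 hd2 hd1 h12.symm hb
  have haa' : G.Adj a a' := by
    by_contra h
    -- P5  d2 - b - a' - d1 - a
    exact p5_aux hP5 hb hba' ha'1.symm ha
      (eds_cross hD hd2 hd1 h12.symm ha'1)
      (eds_indep hD hd2 hd1)
      (eds_cross hD hd2 hd1 h12.symm ha)
      (fun hh => eds_cross hD hd1 hd2 h12 hb hh.symm)
      (fun hh => hab hh.symm)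
      (fun hh => h hh.symm)
      (fun hh => eds_notD hD hd1 ha'1 (hh ▸ hd2))
      h12.symm
      (fun hh => eds_notD hD hd1 ha (hh ▸ hd2))
      (fun hh => eds_notD hD hd2 hb (hh.symm ▸ hd1))
      (eds_class_ne hD hd2 hd1 h12.symm hb ha)
      (fun hh => hab (hh ▸ hba').symm)
  obtain ⟨c, hc3, hac⟩ := lem4 hprime hP5 hD hcard3 hd1 hd3 (fun h => h31 h.symm) ha
  by_cases hbc : G.Adj b c
  · -- P5  d1 - a - c - b - d2
    exact p5_aux hP5 ha hac hbc.symm hb.symm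
      (eds_cross hD hd1 hd3 (fun h => h31 h.symm) hc3)
      (eds_cross hD hd1 hd2 h12 hb)
      (eds_indep hD hd1 hd2)
      hab
      (fun hh => eds_cross hD hd2 hd1 h12.symm ha hh.symm)
      (fun hh => eds_cross hD hd2 hd3 (fun h => h32 h.symm) hc3 hh.symm)
      (fun hh => eds_notD hD hd3 hc3 (hh ▸ hd1))
      (fun hh => eds_notD hD hd2 hb (hh ▸ hd1))
      h12
      (eds_class_ne hD hd1 hd2 h12 ha hb)
      (fun hh => eds_notD hD hd1 ha (hh.symm ▸ hd2))
      (fun hh => eds_notD hD hd3 hc3 (hh.symm ▸ hd2))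
  · have ha'c : G.Adj a' c := by
      by_contra ha'c
      -- P5  b - a' - a - c - d3
      exact p5_aux hP5 hba' haa'.symm hac hc3.symm
        (fun hh => hab hh.symm)
        hbc
        (fun hh => eds_cross hD hd3 hd2 h32 hb hh.symm)
        ha'c
        (fun hh => eds_cross hD hd3 hd1 h31 ha'1 hh.symm)
        (fun hh => eds_cross hD hd3 hd1 h31 ha hh.symm)
        (eds_class_ne hD hd2 hd1 h12.symm hb ha)
        (eds_class_ne hD hd2 hd3 (fun h => h32 h.symm) hb hc3)
        (fun hh => eds_notD hD hd2 hb (hh.symm ▸ hd3))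
        (eds_class_ne hD hd1 hd3 (fun h => h31 h.symm) ha'1 hc3)
        (fun hh => eds_notD hD hd1 ha'1 (hh.symm ▸ hd3))
        (fun hh => eds_notD hD hd1 ha (hh.symm ▸ hd3))
    -- P5  d3 - c - a' - b - d2
    exact p5_aux hP5 hc3 ha'c.symm hba'.symm hb.symm
      (eds_cross hD hd3 hd1 h31 ha'1)
      (eds_cross hD hd3 hd2 h32 hb)
      (eds_indep hD hd3 hd2)
      (fun hh => hbc hh.symm)
      (fun hh => eds_cross hD hd2 hd3 (fun h => h32 h.symm) hc3 hh.symm)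
      (fun hh => eds_cross hD hd2 hd1 h12.symm ha'1 hh.symm)
      (fun hh => eds_notD hD hd1 ha'1 (hh ▸ hd3))
      (fun hh => eds_notD hD hd2 hb (hh ▸ hd3))
      (fun hh => h32 hh)
      (eds_class_ne hD hd3 hd2 (fun h => h32 h) hc3 hb)
      (fun hh => eds_notD hD hd3 hc3 (hh.symm ▸ hd2))
      (fun hh => eds_notD hD hd1 ha'1 (hh.symm ▸ hd2))

/-- Each class is a singleton. -/
lemma lem6 (hprime : G.IsPrime) (hP5 : G.P5Free) (hD : G.IsEDS D)
    (hk : 3 ≤ D.ncard) {d a a' : V} (hd : d ∈ D)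
    (ha : G.Adj d a) (ha' : G.Adj d a') : a = a' := by
  by_contra hne
  apply hprime.2 (G.neighborSet d)
  refine ⟨?_, ?_, ?_⟩
  · exact (Set.one_lt_ncard_iff (Set.toFinite _)).mpr ⟨a, a', ha, ha', hne⟩
  · intro hu
    have : d ∈ G.neighborSet d := hu ▸ Set.mem_univ d
    exact G.irrefl this
  · intro v hv
    by_cases hvD : v ∈ D
    · by_cases hvd : v = d
      · subst hvd
        exact Or.inl (fun h hh => hh)
      · right
        intro h hh hadj
        exact hvd (eds_nc hD hvD hd hadj hh)
    · obtain ⟨e, heD, hev⟩ := eds_dom' hD hvD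
      have hed : e ≠ d := fun h => hv (h ▸ hev)
      left
      intro h hh
      exact lem5 hprime hP5 hD hk heD hd hed hev hh

end Main3


theorem stmt_8 {V : Type*} [Fintype V] (G : SimpleGraph V) (hprime : G.IsPrime)
    (hP5 : G.P5Free) (hns : ¬ G.IsThinSpider) (D : Set V) (hD : G.IsEDS D) :
    D.ncard = 2 := by
  classical
  have hV2 := hprime.1
  have hVne : Nonempty V := by
    rw [← Fintype.card_pos_iff]; omega
  obtain ⟨v0⟩ := hVne
  obtain ⟨e0, he0, -⟩ := eds_dom hD v0
  have h1 : 1 ≤ D.ncard := by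
    rw [Nat.one_le_iff_ne_zero]
    intro h
    rw [Set.ncard_eq_zero (Set.toFinite _)] at h
    rw [h] at he0
    exact he0
  have hne1 : D.ncard ≠ 1 := by
    intro h
    obtain ⟨d, hDd⟩ := Set.ncard_eq_one.mp h
    have hdom : ∀ v, v = d ∨ G.Adj d v := by
      intro v
      obtain ⟨e, heD, hcase⟩ := eds_dom hD v
      rw [hDd, Set.mem_singleton_iff] at heD
      subst heD
      rcases hcase with h' | h'
      · exact Or.inl h'.symm
      · exact Or.inr h'
    by_cases hc : Fintype.card V = 2
    · -- G = K2, a thin spider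
      obtain ⟨w, hwd⟩ := Fintype.exists_ne_of_one_lt_card (by omega) d
      have hadj : G.Adj d w := (hdom w).resolve_left hwd
      have hall : ∀ u : V, u = d ∨ u = w := by
        intro u
        by_contra hcon
        push_neg at hcon
        have hcard : ({u, d, w} : Finset V).card ≤ Fintype.card V :=
          Finset.card_le_univ _
        rw [Finset.card_insert_of_notMem (by simp [hcon.1, hcon.2]),
          Finset.card_insert_of_notMem (by simp [Ne.symm hwd]), Finset.card_singleton] at hcard
        omega
      apply hns
      refine ⟨{d}, {w}, ?_, ?_, ?_, ?_, ?_, ?_⟩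
      · simp [Set.disjoint_singleton, hwd.symm]
      · ext u
        simp only [Set.mem_union, Set.mem_singleton_iff, Set.mem_univ, iff_true]
        exact hall u
      · intro x hx y hy hxy
        rw [Set.mem_singleton_iff] at hx hy
        exact absurd (hx.trans hy.symm) hxy
      · intro a hha b hhb hne
        rw [Set.mem_singleton_iff] at hha hhb
        exact absurd (hha.trans hhb.symm) hne
      · intro c hcs
        rw [Set.mem_singleton_iff] at hcs
        subst hcs
        exact ⟨w, ⟨rfl, hadj⟩, fun y hy => hy.1⟩
      · intro i his
        rw [Set.mem_singleton_iff] at his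
        subst his
        exact ⟨d, ⟨rfl, hadj.symm⟩, fun y hy => hy.1⟩
    · -- |V| ≥ 3 : V \ {d} is homogeneous
      apply hprime.2 ({d}ᶜ)
      refine ⟨?_, ?_, ?_⟩
      · have hsum := Set.ncard_add_ncard_compl ({d} : Set V)
        rw [Set.ncard_singleton, Nat.card_eq_fintype_card] at hsum
        omega
      · intro hu
        have : d ∈ ({d}ᶜ : Set V) := hu ▸ Set.mem_univ d
        exact this rfl
      · intro v hv
        simp only [Set.notMem_compl_iff, Set.mem_singleton_iff] at hv
        left
        intro h hh
        have hhd : h ≠ d := fun h' => hh (by simp [h'])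
        have := (hdom h).resolve_left hhd
        rw [hv]
        exact this
  have hne3 : ¬ 3 ≤ D.ncard := by
    intro hk
    have hcard3 : 3 ≤ Fintype.card V := by
      calc 3 ≤ D.ncard := hk
      _ ≤ (Set.univ : Set V).ncard := Set.ncard_le_ncard (Set.subset_univ D) (Set.toFinite _)
      _ = Fintype.card V := by rw [Set.ncard_univ, Nat.card_eq_fintype_card]
    apply hns
    refine ⟨Dᶜ, D, disjoint_compl_left, by simp, ?_, ?_, ?_, ?_⟩
    · -- Dᶜ is a clique
      intro u hu v hv huv
      obtain ⟨du, hduD, hduu⟩ := eds_dom' hD hu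
      obtain ⟨dv, hdvD, hdvv⟩ := eds_dom' hD hv
      have hdne : du ≠ dv := by
        intro h
        exact huv (lem6 hprime hP5 hD hk hduD hduu (h ▸ hdvv))
      exact lem5 hprime hP5 hD hk hduD hdvD hdne hduu hdvv
    · intro a ha b hb hne
      exact eds_indep hD ha hb
    · intro c hc
      obtain ⟨dc, hdcD, hdcc⟩ := eds_dom' hD hc
      refine ⟨dc, ⟨hdcD, hdcc.symm⟩, ?_⟩
      rintro y ⟨hyD, hyc⟩
      exact eds_nc hD hyD hdcD hyc.symm hdcc
    · intro i hi
      obtain ⟨w, hw⟩ := no_isolated hprime hcard3 i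
      have hwD : w ∉ D := eds_notD hD hi hw
      refine ⟨w, ⟨hwD, hw⟩, ?_⟩
      rintro y ⟨hyD, hyi⟩
      exact lem6 hprime hP5 hD hk hi hyi hw
  omega
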